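/- Let 1 ≤ p < +∞ and let g belong to the little Bloch space 𝓑₀. Then for every analytic function f on 𝔻 with ρ_{p,∞}(f) < ∞, the function T_g f belongs to RM(p,0). -/

import Mathlib

open MeasureTheory Metric Set Filter
open scoped ENNReal

/-- The point `r e^{iθ}` of the complex plane. -/
noncomputable def circ (r θ : ℝ) : ℂ := r * Complex.exp (θ * Complex.I)

/-- `ρ_{p,∞}(h) = sup_θ (∫₀¹ |h(re^{iθ})|^p dr)^{1/p}` (with values in `ℝ≥0∞`). -/
noncomputable def rhoInf (p : ℝ) (h : ℂ → ℂ) : ℝ≥0∞ :=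
  ⨆ θ : ℝ, (∫⁻ r in Ioc (0:ℝ) 1, ENNReal.ofReal (‖h (circ r θ)‖ ^ p)) ^ (1/p)

/-- `f` belongs to `RM(p,0)`: `f` is analytic on the unit disc and
`lim_{ρ→1⁻} sup_θ (∫_ρ¹ |f(re^{iθ})|^p dr)^{1/p} = 0`. -/
def memRMp0 (p : ℝ) (f : ℂ → ℂ) : Prop :=
  DifferentiableOn ℂ f (ball (0:ℂ) 1) ∧
    Tendsto (fun ρ : ℝ => ⨆ θ : ℝ,
        (∫⁻ r in Ioc ρ 1, ENNReal.ofReal (‖f (circ r θ)‖ ^ p)) ^ (1/p))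
      (nhdsWithin 1 (Iio (1:ℝ))) (nhds 0)

/-- The integration operator `T_g f(z) = ∫₀^z f(w) g'(w) dw` (integral along the
segment from `0` to `z`). -/
noncomputable def Tg (g f : ℂ → ℂ) (z : ℂ) : ℂ :=
  z * ∫ t in (0:ℝ)..1, f ((t : ℂ) * z) * deriv g ((t : ℂ) * z)

/-- `g` belongs to the little Bloch space: `(1-|z|²)|g'(z)| → 0` as `|z| → 1⁻`. -/
def littleBloch (g : ℂ → ℂ) : Prop :=
  Tendsto (fun z : ℂ => (1 - ‖z‖ ^ 2) * ‖deriv g z‖)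
    (Filter.comap (fun z : ℂ => ‖z‖) (nhdsWithin 1 (Iio (1:ℝ)))) (nhds 0)

lemma diffOn_aux {F : ℂ → ℂ} (hF : AnalyticOnNhd ℂ F (ball (0:ℂ) 1)) :
    DifferentiableOn ℂ (fun z => z * ∫ t in (0:ℝ)..1, F ((t:ℂ) * z)) (ball (0:ℂ) 1) := by
  have hFd : DifferentiableOn ℂ F (ball (0:ℂ) 1) := hF.differentiableOn
  have hFc : ContinuousOn F (ball (0:ℂ) 1) := hFd.continuousOn
  have hF' : ContinuousOn (deriv F) (ball (0:ℂ) 1) :=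
    (hF.deriv).differentiableOn.continuousOn
  have hmem1 : ∀ (t : ℝ), t ∈ Set.Icc (0:ℝ) 1 → ∀ (z : ℂ), ‖z‖ < 1 → (t:ℂ) * z ∈ ball (0:ℂ) 1 := by
    intro t ht z hz
    rw [mem_ball, dist_zero_right, norm_mul, Complex.norm_real, Real.norm_eq_abs,
      abs_of_nonneg ht.1]
    nlinarith [ht.1, ht.2, norm_nonneg z]
  have hcont : ∀ (z : ℂ), ‖z‖ < 1 → ContinuousOn (fun t : ℝ => F ((t:ℂ)*z)) (Set.Icc 0 1) :=
    fun z hz => hFc.comp ((Complex.continuous_ofReal.mul continuous_const).continuousOn)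
      (fun t ht => hmem1 t ht z hz)
  intro z₀ hz₀
  apply DifferentiableAt.differentiableWithinAt
  apply DifferentiableAt.mul differentiableAt_id
  rw [mem_ball, dist_zero_right] at hz₀
  set R : ℝ := (1 + ‖z₀‖)/2 with hR
  have hR1 : R < 1 := by simp only [hR]; linarith
  have hzR : ‖z₀‖ < R := by simp only [hR]; linarith
  have hR0 : 0 ≤ R := by positivity
  set ε : ℝ := R - ‖z₀‖ with hε
  have hε0 : 0 < ε := by simp only [hε]; linarith
  have hsub : closedBall (0:ℂ) R ⊆ ball (0:ℂ) 1 := closedBall_subset_ball hR1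
  obtain ⟨C, hC⟩ := (isCompact_closedBall (0:ℂ) R).exists_bound_of_continuousOn
    (hF'.mono hsub)
  have hmem : ∀ (t : ℝ), t ∈ Set.Ioc (0:ℝ) 1 → ∀ z ∈ ball z₀ ε, (t:ℂ) * z ∈ closedBall (0:ℂ) R := by
    intro t ht z hz
    rw [mem_ball, dist_eq_norm] at hz
    have hzn : ‖z‖ < R := by
      calc ‖z‖ ≤ ‖z₀‖ + ‖z - z₀‖ := norm_le_norm_add_norm_sub' z z₀
      _ < ‖z₀‖ + ε := by linarith
      _ = R := by simp [hε]
    rw [mem_closedBall, dist_zero_right, norm_mul, Complex.norm_real, Real.norm_eq_abs,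
      abs_of_pos ht.1]
    nlinarith [ht.1.le, ht.2, norm_nonneg z]
  have key : HasDerivAt (fun z : ℂ => ∫ t in Set.Ioc (0:ℝ) 1, F ((t:ℂ) * z))
      (∫ t in Set.Ioc (0:ℝ) 1, deriv F ((t:ℂ) * z₀) * (t:ℂ)) z₀ := by
    have := hasDerivAt_integral_of_dominated_loc_of_deriv_le (μ := volume.restrict (Set.Ioc (0:ℝ) 1))
      (F := fun (z : ℂ) (t : ℝ) => F ((t:ℂ) * z))
      (F' := fun (z : ℂ) (t : ℝ) => deriv F ((t:ℂ) * z) * (t:ℂ))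
      (x₀ := z₀) (bound := fun _ => |C|) (ball_mem_nhds z₀ hε0) ?_ ?_ ?_ ?_ ?_ ?_
    · exact this.2
    · -- hF_meas
      filter_upwards [isOpen_ball.eventually_mem (mem_ball_zero_iff.2 hz₀)] with z hz
      have hzn : ‖z‖ < 1 := mem_ball_zero_iff.1 hz
      exact ContinuousOn.aestronglyMeasurable
        ((hcont z hzn).mono Set.Ioc_subset_Icc_self) measurableSet_Ioc
    · -- hF_int
      exact (ContinuousOn.integrableOn_Icc (hcont z₀ hz₀)).mono_set Set.Ioc_subset_Icc_self
    · -- hF'_meas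
      apply ContinuousOn.aestronglyMeasurable ?_ measurableSet_Ioc
      apply ContinuousOn.mul ?_ (Complex.continuous_ofReal.continuousOn)
      apply ContinuousOn.mono ?_ (Set.Ioc_subset_Icc_self)
      exact hF'.comp ((Complex.continuous_ofReal.mul continuous_const).continuousOn)
        (fun t ht => hmem1 t ht z₀ hz₀)
    · -- h_bound
      filter_upwards [self_mem_ae_restrict measurableSet_Ioc] with t ht z hz
      rw [norm_mul, Complex.norm_real, Real.norm_eq_abs, abs_of_pos ht.1]
      have := hC ((t:ℂ)*z) (hmem t ht z hz)
      nlinarith [ht.1.le, ht.2, norm_nonneg (deriv F ((t:ℂ)*z)), le_abs_self C]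
    · exact integrable_const _
    · -- h_diff
      filter_upwards [self_mem_ae_restrict measurableSet_Ioc] with t ht z hz
      have h1 : (t:ℂ) * z ∈ closedBall (0:ℂ) R := hmem t ht z hz
      have h2 : DifferentiableAt ℂ F ((t:ℂ)*z) :=
        hFd.differentiableAt (isOpen_ball.mem_nhds (hsub h1))
      have h3 : HasDerivAt (fun w : ℂ => (t:ℂ) * w) (t:ℂ) z := by
        simpa using (hasDerivAt_id z).const_mul (t:ℂ)
      exact h2.hasDerivAt.comp z h3
  have heq : (fun z : ℂ => ∫ t in (0:ℝ)..1, F ((t:ℂ) * z))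
      = fun z : ℂ => ∫ t in Set.Ioc (0:ℝ) 1, F ((t:ℂ) * z) := by
    funext z; exact intervalIntegral.integral_of_le zero_le_one
  rw [heq]
  exact key.differentiableAt

lemma swap_bound (ψ v : ℝ → ℝ≥0∞) (hψ : Measurable ψ) (hv : Measurable v) (ρ r₀ : ℝ) :
    ∫⁻ r in Ioo ρ 1, (v r * ∫⁻ t in Ioc r₀ r, ψ t) ≤
      ∫⁻ t in Ioo r₀ 1, ψ t * ∫⁻ r in Ico t 1, v r := by
  have h1 : ∀ r ∈ Ioo ρ (1:ℝ), (∫⁻ t in Ioc r₀ r, ψ t)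
      = ∫⁻ t in Ioo r₀ 1, (Iic r).indicator ψ t := by
    intro r hr
    rw [lintegral_indicator measurableSet_Iic, Measure.restrict_restrict measurableSet_Iic]
    have hset : Iic r ∩ Ioo r₀ 1 = Ioc r₀ r := by
      ext t
      constructor
      · rintro ⟨h3, h1', _⟩; exact ⟨h1', h3⟩
      · rintro ⟨h1', h2⟩; exact ⟨h2, h1', lt_of_le_of_lt h2 hr.2⟩
    rw [hset]
  calc ∫⁻ r in Ioo ρ 1, (v r * ∫⁻ t in Ioc r₀ r, ψ t)
      = ∫⁻ r in Ioo ρ 1, ∫⁻ t in Ioo r₀ 1, v r * (Iic r).indicator ψ t := by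
        apply setLIntegral_congr_fun measurableSet_Ioo
        intro r hr
        dsimp only
        rw [h1 r hr, lintegral_const_mul'' (v r) ((hψ.indicator measurableSet_Iic).aemeasurable)]
    _ = ∫⁻ t in Ioo r₀ 1, ∫⁻ r in Ioo ρ 1, v r * (Iic r).indicator ψ t := by
        apply lintegral_lintegral_swap
        have : (Function.uncurry fun (r t : ℝ) => v r * (Iic r).indicator ψ t)
            = fun q : ℝ × ℝ =>
              v q.1 * (if q.2 ≤ q.1 then ψ q.2 else 0) := by
          funext q
          simp [Function.uncurry, Set.indicator, mem_Iic]
        rw [this]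
        exact ((hv.comp measurable_fst).mul (Measurable.ite
          (measurableSet_le measurable_snd measurable_fst)
          (hψ.comp measurable_snd) measurable_const)).aemeasurable
    _ ≤ ∫⁻ t in Ioo r₀ 1, ψ t * ∫⁻ r in Ico t 1, v r := by
        apply lintegral_mono
        intro t
        show (∫⁻ (r : ℝ) in Ioo ρ 1, v r * (Iic r).indicator ψ t) ≤ ψ t * ∫⁻ (r : ℝ) in Ico t 1, v r
        have heq : (fun r : ℝ => v r * (Iic r).indicator ψ t)
            = fun r => ψ t * (Ici t).indicator v r := by
          funext r
          simp only [Set.indicator, mem_Iic, mem_Ici]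
          by_cases h : t ≤ r <;> simp [h, mul_comm]
        rw [heq, lintegral_const_mul'' (ψ t) ((hv.indicator measurableSet_Ici).aemeasurable)]
        apply mul_le_mul_right
        rw [lintegral_indicator measurableSet_Ici, Measure.restrict_restrict measurableSet_Ici]
        apply lintegral_mono_set
        rintro x ⟨hx1, hx2, hx3⟩
        exact ⟨hx1, hx3⟩

noncomputable def wE (t : ℝ) : ℝ≥0∞ := ENNReal.ofReal (1 - t)

lemma wE_measurable : Measurable wE :=
  ENNReal.measurable_ofReal.comp (measurable_const.sub measurable_id)

lemma wE_rpow_measurable (y : ℝ) : Measurable (fun t => wE t ^ y) :=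
  (ENNReal.continuous_rpow_const.measurable).comp wE_measurable

/-- W1: `∫_{[t,1)} (1-r)^{-β} dr ≤ (1-t)^{1-β}/(1-β)` for `0 ≤ β < 1`. -/
lemma weight_bound1 {β : ℝ} (hβ0 : 0 ≤ β) (hβ1 : β < 1) (t : ℝ) :
    ∫⁻ r in Ico t 1, (wE r) ^ (-β) ≤ ENNReal.ofReal ((1 - t) ^ (1 - β) / (1 - β)) := by
  by_cases ht : t < 1
  swap
  · rw [Ico_eq_empty (by linarith [not_lt.1 ht]), Measure.restrict_empty,
      lintegral_zero_measure]
    exact zero_le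
  rw [← setLIntegral_congr (Ioo_ae_eq_Ico (μ := volume) (a := t) (b := 1))]
  have hcong : ∫⁻ r in Ioo t 1, (wE r) ^ (-β)
      = ∫⁻ r in Ioo t 1, ENNReal.ofReal ((1 - r) ^ (-β)) := by
    apply setLIntegral_congr_fun measurableSet_Ioo
    intro r hr
    dsimp only
    rw [wE, ENNReal.ofReal_rpow_of_pos (by linarith [hr.2])]
  rw [hcong]
  have hint : IntegrableOn (fun r : ℝ => (1 - r) ^ (-β)) (Ioo t 1) := by
    have i1 : IntervalIntegrable (fun x : ℝ => x ^ (-β)) volume 0 (1 - t) :=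
      intervalIntegral.intervalIntegrable_rpow' (by linarith)
    have i2 := i1.comp_sub_left 1
    rw [intervalIntegrable_iff] at i2
    simp only [sub_zero, sub_sub_cancel] at i2
    exact i2.mono_set (by
      rw [Set.uIoc_comm, Set.uIoc_of_le ht.le]
      exact Set.Ioo_subset_Ioc_self)
  rw [← ofReal_integral_eq_lintegral_ofReal hint]
  · apply ENNReal.ofReal_le_ofReal
    have : ∫ r in Ioo t 1, (1 - r) ^ (-β) = ∫ r in t..1, (1 - r) ^ (-β) := by
      rw [intervalIntegral.integral_of_le ht.le, integral_Ioc_eq_integral_Ioo]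
    rw [this, intervalIntegral.integral_comp_sub_left (fun x => x ^ (-β)) 1]
    simp only [sub_self, sub_sub_cancel]
    rw [integral_rpow (Or.inl (by linarith))]
    rw [Real.zero_rpow (by linarith : -β + 1 ≠ 0)]
    have h1 : -β + 1 = 1 - β := by ring
    rw [h1, sub_zero]
  · filter_upwards [self_mem_ae_restrict measurableSet_Ioo] with r hr
    exact Real.rpow_nonneg (by linarith [hr.2]) _

/-- W2: `∫_{(r₀,r']} (1-t)^{-(1+γ)} dt ≤ (1-r')^{-γ}/γ` for `γ > 0`, `r' < 1`. -/
lemma weight_bound2 {γ : ℝ} (hγ : 0 < γ) {r₀ r' : ℝ} (hr' : r' < 1) :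
    ∫⁻ t in Ioc r₀ r', (wE t) ^ (-(1 + γ)) ≤ ENNReal.ofReal ((1 - r') ^ (-γ) / γ) := by
  by_cases hrr : r₀ < r'
  swap
  · rw [Ioc_eq_empty (by exact fun h => hrr h), Measure.restrict_empty, lintegral_zero_measure]
    exact zero_le
  have hcong : ∫⁻ t in Ioc r₀ r', (wE t) ^ (-(1 + γ))
      = ∫⁻ t in Ioc r₀ r', ENNReal.ofReal ((1 - t) ^ (-(1 + γ))) := by
    apply setLIntegral_congr_fun measurableSet_Ioc
    intro s hs
    dsimp only
    rw [wE, ENNReal.ofReal_rpow_of_pos (by linarith [hs.2])]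
  rw [hcong]
  have hint : IntegrableOn (fun s : ℝ => (1 - s) ^ (-(1 + γ))) (Ioc r₀ r') := by
    apply (ContinuousOn.integrableOn_Icc ?_).mono_set Set.Ioc_subset_Icc_self
    apply ContinuousOn.rpow_const ((continuous_const.sub continuous_id).continuousOn)
    intro s hs
    left
    have := hs.2
    intro h
    have : (1:ℝ) - s > 0 := by linarith [hs.2]
    simp only [Pi.sub_apply, id] at h
    linarith [h ▸ this]
  rw [← ofReal_integral_eq_lintegral_ofReal hint]
  · apply ENNReal.ofReal_le_ofReal
    have h0 : ∫ s in Ioc r₀ r', (1 - s) ^ (-(1 + γ)) = ∫ s in r₀..r', (1 - s) ^ (-(1 + γ)) :=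
      (intervalIntegral.integral_of_le hrr.le).symm
    rw [h0, intervalIntegral.integral_comp_sub_left (fun x => x ^ (-(1 + γ))) 1]
    rw [integral_rpow (Or.inr ⟨fun h => by linarith, by
      intro h
      rcases Set.mem_uIcc.1 h with h1 | h1 <;> nlinarith [h1.1, h1.2]⟩)]
    have h1 : -(1 + γ) + 1 = -γ := by ring
    rw [h1]
    have h2 : ((1 - r₀) ^ (-γ) - (1 - r') ^ (-γ)) / (-γ)
        = ((1 - r') ^ (-γ) - (1 - r₀) ^ (-γ)) / γ := by ring
    rw [h2]
    gcongr
    nlinarith [Real.rpow_nonneg (by linarith : (0:ℝ) ≤ 1 - r₀) (-γ)]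
  · filter_upwards [self_mem_ae_restrict measurableSet_Ioc] with s hs
    exact Real.rpow_nonneg (by linarith [hs.2]) _

lemma ennreal_mul_inv_mul_le (a b : ℝ≥0∞) : a * b⁻¹ * b ≤ a := by
  rcases eq_or_ne b 0 with rfl | hb0
  · simp
  rcases eq_or_ne b ⊤ with rfl | hbt
  · simp
  rw [mul_assoc, ENNReal.inv_mul_cancel hb0 hbt, mul_one]

/-- The Hardy-type inequality. -/
lemma hardy {p : ℝ} (hp : 1 ≤ p) (φ : ℝ → ℝ≥0∞) (hφ : Measurable φ) (r₀ ρ : ℝ) :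
    ∫⁻ r in Ioo ρ 1, (∫⁻ t in Ioc r₀ r, φ t * (wE t)⁻¹) ^ p
      ≤ ENNReal.ofReal p ^ p * ∫⁻ t in Ioo r₀ 1, φ t ^ p := by
  rcases eq_or_lt_of_le hp with hp1 | hp1
  · -- p = 1
    subst hp1
    simp only [ENNReal.rpow_one, ENNReal.ofReal_one, ENNReal.one_rpow, one_mul]
    calc ∫⁻ r in Ioo ρ 1, ∫⁻ t in Ioc r₀ r, φ t * (wE t)⁻¹
        = ∫⁻ r in Ioo ρ 1, ((1:ℝ≥0∞) * ∫⁻ t in Ioc r₀ r, φ t * (wE t)⁻¹) := by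
          simp only [one_mul]
      _ ≤ ∫⁻ t in Ioo r₀ 1, (φ t * (wE t)⁻¹) * ∫⁻ r in Ico t 1, (1:ℝ≥0∞) :=
          swap_bound (fun t => φ t * (wE t)⁻¹) 1
            (hφ.mul (wE_measurable.inv)) measurable_const ρ r₀
      _ ≤ ∫⁻ t in Ioo r₀ 1, φ t := by
          apply lintegral_mono
          intro t
          show φ t * (wE t)⁻¹ * (∫⁻ _ in Ico t 1, (1:ℝ≥0∞)) ≤ φ t
          rw [setLIntegral_one, Real.volume_Ico]
          exact ennreal_mul_inv_mul_le _ _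
  · -- p > 1
    have hp0 : (0:ℝ) < p := by linarith
    have hpne : p ≠ 0 := ne_of_gt hp0
    set q : ℝ := p / (p - 1) with hq
    have hpq : p.HolderConjugate q := Real.HolderConjugate.conjExponent hp1
    have hq0 : 0 < q := hpq.symm.pos
    have hqinv : 1/q = 1 - 1/p := by
      rw [hq]; field_simp [show p - 1 ≠ 0 by linarith]
    -- exponents
    set a₁ : ℝ := -1/(p*p) with ha₁
    set a₂ : ℝ := -1 - a₁ with ha₂
    have ha₁p : a₁ * p = -(1/p) := by rw [ha₁]; field_simp
    have ha₂q : a₂ * q = -(1 + 1/p) := by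
      have hp1' : p - 1 ≠ 0 := by intro h; linarith
      rw [ha₂, ha₁, hq]; field_simp
      ring
    set β : ℝ := (p-1)/p with hβ
    have hβ0 : 0 ≤ β := div_nonneg (by linarith) hp0.le
    have hβ1 : β < 1 := by rw [hβ, div_lt_one hp0]; linarith
    have h1β : 1 - β = 1/p := by rw [hβ]; field_simp; ring
    set ψ : ℝ → ℝ≥0∞ := fun t => φ t ^ p * wE t ^ (-(1/p)) with hψ
    have hψm : Measurable ψ :=
      ((ENNReal.continuous_rpow_const.measurable).comp hφ).mul (wE_rpow_measurable _)
    set v : ℝ → ℝ≥0∞ := fun r => wE r ^ (-β) with hv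
    have hvm : Measurable v := wE_rpow_measurable _
    set cp : ℝ≥0∞ := ENNReal.ofReal p ^ (p-1) with hcp
    -- pointwise bound on G r ^ p
    have key : ∀ r ∈ Ioo ρ (1:ℝ),
        (∫⁻ t in Ioc r₀ r, φ t * (wE t)⁻¹) ^ p ≤ cp * (v r * ∫⁻ t in Ioc r₀ r, ψ t) := by
      intro r hr
      have hr1 : r < 1 := hr.2
      -- Hölder
      have hsplit : ∫⁻ t in Ioc r₀ r, φ t * (wE t)⁻¹
          = ∫⁻ t in Ioc r₀ r, (φ t * wE t ^ a₁) * (wE t ^ a₂) := by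
        apply setLIntegral_congr_fun measurableSet_Ioc
        intro t ht
        dsimp only
        have hw0 : wE t ≠ 0 := by
          rw [wE]; simp only [ne_eq, ENNReal.ofReal_eq_zero, not_le]; linarith [ht.2]
        have hwt : wE t ≠ ⊤ := ENNReal.ofReal_ne_top
        rw [mul_assoc, ← ENNReal.rpow_add _ _ hw0 hwt]
        have : a₁ + a₂ = -1 := by rw [ha₂]; ring
        rw [this, ENNReal.rpow_neg_one]
      have hold := ENNReal.lintegral_mul_le_Lp_mul_Lq (volume.restrict (Ioc r₀ r)) hpq
        ((hφ.mul (wE_rpow_measurable a₁)).aemeasurable)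
        ((wE_rpow_measurable a₂).aemeasurable)
      rw [hsplit]
      -- compute the two factors
      have hA : ∫⁻ t in Ioc r₀ r, (φ t * wE t ^ a₁) ^ p = ∫⁻ t in Ioc r₀ r, ψ t := by
        apply setLIntegral_congr_fun measurableSet_Ioc
        intro t ht
        dsimp only
        rw [ENNReal.mul_rpow_of_nonneg _ _ hp0.le, ← ENNReal.rpow_mul, ha₁p]
      have hB : ∫⁻ t in Ioc r₀ r, (wE t ^ a₂) ^ q ≤ ENNReal.ofReal ((1-r) ^ (-(1/p)) / (1/p)) := by
        have : ∀ t : ℝ, (wE t ^ a₂) ^ q = wE t ^ (-(1 + 1/p)) := by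
          intro t; rw [← ENNReal.rpow_mul, ha₂q]
        simp only [this]
        exact weight_bound2 (by positivity) hr1
      calc (∫⁻ t in Ioc r₀ r, (φ t * wE t ^ a₁) * wE t ^ a₂) ^ p
          ≤ ((∫⁻ t in Ioc r₀ r, (φ t * wE t ^ a₁) ^ p) ^ (1/p)
              * (∫⁻ t in Ioc r₀ r, (wE t ^ a₂) ^ q) ^ (1/q)) ^ p :=
            ENNReal.rpow_le_rpow hold hp0.le
        _ = (∫⁻ t in Ioc r₀ r, (φ t * wE t ^ a₁) ^ p)
              * ((∫⁻ t in Ioc r₀ r, (wE t ^ a₂) ^ q) ^ (1/q)) ^ p := by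
            rw [ENNReal.mul_rpow_of_nonneg _ _ hp0.le, ← ENNReal.rpow_mul,
              one_div_mul_cancel hpne, ENNReal.rpow_one]
        _ ≤ (∫⁻ t in Ioc r₀ r, ψ t) * (ENNReal.ofReal ((1-r) ^ (-(1/p)) / (1/p)) ^ (1/q)) ^ p := by
            rw [hA]
            apply mul_le_mul_right
            apply ENNReal.rpow_le_rpow _ hp0.le
            exact ENNReal.rpow_le_rpow hB (by positivity)
        _ ≤ cp * (v r * ∫⁻ t in Ioc r₀ r, ψ t) := by
            rw [← ENNReal.rpow_mul]
            have hrw : ENNReal.ofReal ((1-r) ^ (-(1/p)) / (1/p))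
                = ENNReal.ofReal p * wE r ^ (-(1/p)) := by
              have h2 : (1-r) ^ (-(1/p)) / (1/p) = p * (1-r) ^ (-(1/p)) := by
                field_simp
              rw [h2, ENNReal.ofReal_mul hp0.le, wE,
                ENNReal.ofReal_rpow_of_pos (by linarith [hr.2])]
            rw [hrw]
            have h3 : (1/q) * p = p - 1 := by
              rw [hqinv]; field_simp
            rw [h3, ENNReal.mul_rpow_of_nonneg _ _ (by linarith : (0:ℝ) ≤ p - 1),
              ← ENNReal.rpow_mul]
            have h4 : -(1/p) * (p-1) = -β := by rw [hβ]; field_simp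
            rw [h4]
            simp only [hcp, hv]
            exact le_of_eq (by ring)
    -- assemble
    have hcpt : cp ≠ ⊤ := by
      rw [hcp]
      exact ENNReal.rpow_ne_top_of_nonneg (by linarith) ENNReal.ofReal_ne_top
    calc ∫⁻ r in Ioo ρ 1, (∫⁻ t in Ioc r₀ r, φ t * (wE t)⁻¹) ^ p
        ≤ ∫⁻ r in Ioo ρ 1, cp * (v r * ∫⁻ t in Ioc r₀ r, ψ t) :=
          setLIntegral_mono' measurableSet_Ioo key
      _ = cp * ∫⁻ r in Ioo ρ 1, (v r * ∫⁻ t in Ioc r₀ r, ψ t) := by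
          rw [lintegral_const_mul' _ _ hcpt]
      _ ≤ cp * ∫⁻ t in Ioo r₀ 1, ψ t * ∫⁻ r in Ico t 1, v r :=
          mul_le_mul_right (swap_bound ψ v hψm hvm ρ r₀) cp
      _ ≤ cp * ∫⁻ t in Ioo r₀ 1, ψ t * ENNReal.ofReal ((1-t) ^ (1-β) / (1-β)) := by
          apply mul_le_mul_right
          apply lintegral_mono
          intro t
          exact mul_le_mul_right (weight_bound1 hβ0 hβ1 t) _
      _ ≤ cp * ∫⁻ t in Ioo r₀ 1, ENNReal.ofReal p * φ t ^ p := by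
          apply mul_le_mul_right
          apply setLIntegral_mono' measurableSet_Ioo
          intro t ht
          have hwt0 : wE t ≠ 0 := by
            rw [wE]; simp only [ne_eq, ENNReal.ofReal_eq_zero, not_le]; linarith [ht.2]
          have hwtt : wE t ≠ ⊤ := ENNReal.ofReal_ne_top
          have h5 : ENNReal.ofReal ((1-t) ^ (1-β) / (1-β)) = ENNReal.ofReal p * wE t ^ (1/p) := by
            have h6 : (1-t) ^ (1-β) / (1-β) = p * (1-t) ^ (1/p) := by
              rw [h1β]; field_simp
            rw [h6, ENNReal.ofReal_mul hp0.le, wE,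
              ENNReal.ofReal_rpow_of_pos (by linarith [ht.2])]
          rw [h5, hψ]
          have h7 : φ t ^ p * wE t ^ (-(1/p)) * (ENNReal.ofReal p * wE t ^ (1/p))
              = ENNReal.ofReal p * φ t ^ p * (wE t ^ (-(1/p)) * wE t ^ (1/p)) := by ring
          rw [h7, ← ENNReal.rpow_add _ _ hwt0 hwtt]
          simp only [neg_add_cancel, ENNReal.rpow_zero, mul_one, le_refl]
      _ = ENNReal.ofReal p ^ p * ∫⁻ t in Ioo r₀ 1, φ t ^ p := by
          rw [lintegral_const_mul' _ _ ENNReal.ofReal_ne_top, ← mul_assoc]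
          congr 1
          rw [hcp]
          nth_rewrite 2 [← ENNReal.rpow_one (ENNReal.ofReal p)]
          rw [← ENNReal.rpow_add _ _ (by simp [hp0] : ENNReal.ofReal p ≠ 0)
            ENNReal.ofReal_ne_top]
          norm_num

lemma circ_norm (θ : ℝ) {r : ℝ} (hr : 0 ≤ r) : ‖circ r θ‖ = r := by
  rw [circ, norm_mul, Complex.norm_real, Real.norm_eq_abs, abs_of_nonneg hr]
  rw [Complex.norm_exp_ofReal_mul_I, mul_one]

lemma circ_smul (t r θ : ℝ) : (t:ℂ) * circ r θ = circ (t*r) θ := by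
  rw [circ, circ]
  push_cast
  ring

lemma circ_mem_ball (θ : ℝ) {r : ℝ} (hr0 : 0 ≤ r) (hr1 : r < 1) :
    circ r θ ∈ Metric.ball (0:ℂ) 1 := by
  rw [Metric.mem_ball, dist_zero_right, circ_norm θ hr0]
  exact hr1

lemma circ_cont (θ : ℝ) : Continuous (fun u : ℝ => circ u θ) :=
  Complex.continuous_ofReal.mul continuous_const

/-- Pointwise bound for the integration operator along a ray. -/
lemma Tg_ray_bound {F : ℂ → ℂ} (θ : ℝ) {r : ℝ} (hr0 : 0 < r) :
    ‖(circ r θ) * ∫ t in (0:ℝ)..1, F ((t:ℂ) * circ r θ)‖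
      ≤ ∫ u in (0:ℝ)..r, ‖F (circ u θ)‖ := by
  rw [norm_mul, circ_norm θ hr0.le]
  have h1 : ‖∫ t in (0:ℝ)..1, F ((t:ℂ) * circ r θ)‖
      ≤ ∫ t in (0:ℝ)..1, ‖F ((t:ℂ) * circ r θ)‖ :=
    intervalIntegral.norm_integral_le_integral_norm zero_le_one
  have h2 : (∫ t in (0:ℝ)..1, ‖F ((t:ℂ) * circ r θ)‖)
      = ∫ t in (0:ℝ)..1, (fun u : ℝ => ‖F (circ u θ)‖) (t * r) := by
    apply intervalIntegral.integral_congr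
    intro t _
    show ‖F ((t:ℂ) * circ r θ)‖ = ‖F (circ (t*r) θ)‖
    rw [circ_smul]
  have h3 := intervalIntegral.integral_comp_mul_right (a := (0:ℝ)) (b := 1) (c := r)
    (fun u => ‖F (circ u θ)‖) (ne_of_gt hr0)
  calc r * ‖∫ t in (0:ℝ)..1, F ((t:ℂ) * circ r θ)‖
      ≤ r * ∫ t in (0:ℝ)..1, ‖F ((t:ℂ) * circ r θ)‖ := by
        apply mul_le_mul_of_nonneg_left h1 hr0.le
    _ = r * (r⁻¹ • ∫ u in (0:ℝ)*r..1*r, ‖F (circ u θ)‖) := by rw [h2, h3]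
    _ = ∫ u in (0:ℝ)..r, ‖F (circ u θ)‖ := by
        rw [smul_eq_mul, ← mul_assoc, mul_inv_cancel₀ (ne_of_gt hr0), one_mul,
          zero_mul, one_mul]


lemma bloch_small {g : ℂ → ℂ} (hg0 : littleBloch g) {ε : ℝ} (hε : 0 < ε) :
    ∃ r₀ : ℝ, 0 ≤ r₀ ∧ r₀ < 1 ∧ ∀ z : ℂ, r₀ ≤ ‖z‖ → ‖z‖ < 1 →
      (1 - ‖z‖ ^ 2) * ‖deriv g z‖ ≤ ε := by
  have h1 : Iio ε ∈ nhds (0:ℝ) := Iio_mem_nhds hε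
  have h2 := hg0 h1
  rw [Filter.mem_map, Filter.mem_comap] at h2
  obtain ⟨S, hS, hSsub⟩ := h2
  rw [mem_nhdsLT_iff_exists_Ioo_subset' (show (0:ℝ) < 1 by norm_num)] at hS
  obtain ⟨l, hl, hlsub⟩ := hS
  rw [mem_Iio] at hl
  refine ⟨max 0 ((l+1)/2), le_max_left _ _, max_lt (by norm_num) (by linarith), ?_⟩
  intro z hz1 hz2
  have h3 : (l+1)/2 ≤ ‖z‖ := le_trans (le_max_right _ _) hz1
  have : ‖z‖ ∈ Ioo l 1 := ⟨by linarith, hz2⟩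
  exact le_of_lt (hSsub (hlsub this))
lemma per_theta (p : ℝ) (hp : 1 ≤ p) (F f : ℂ → ℂ)
    (hFc : ContinuousOn F (Metric.ball (0:ℂ) 1))
    (hfc : ContinuousOn f (Metric.ball (0:ℂ) 1))
    {r₀ ρ ε' C₀ : ℝ} (hr₀0 : 0 ≤ r₀) (hρ : r₀ ≤ ρ) (hρ1 : ρ < 1)
    (hε' : 0 ≤ ε') (hC₀ : 0 ≤ C₀) (θ : ℝ)
    (hFf : ∀ u : ℝ, r₀ ≤ u → u < 1 → ‖F (circ u θ)‖ ≤ ε' * (‖f (circ u θ)‖ * (1-u)⁻¹))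
    (hC : ∀ u : ℝ, 0 ≤ u → u ≤ r₀ → ‖F (circ u θ)‖ ≤ C₀) :
    (∫⁻ r in Ioc ρ 1,
        ENNReal.ofReal (‖(circ r θ) * ∫ t in (0:ℝ)..1, F ((t:ℂ) * circ r θ)‖ ^ p)) ^ (1/p)
      ≤ ENNReal.ofReal (r₀ * C₀) * ENNReal.ofReal (1-ρ) ^ (1/p)
        + ENNReal.ofReal ε' * (ENNReal.ofReal p *
            (∫⁻ t in Ioc (0:ℝ) 1, ENNReal.ofReal (‖f (circ t θ)‖ ^ p)) ^ (1/p)) := by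
  have hp0 : (0:ℝ) < p := by linarith
  have hpne : p ≠ 0 := ne_of_gt hp0
  have hr₀1 : r₀ < 1 := lt_of_le_of_lt hρ hρ1
  set φ : ℝ → ℝ≥0∞ := (Ioo (0:ℝ) 1).indicator (fun t => ENNReal.ofReal ‖f (circ t θ)‖) with hφ
  have hφae : AEMeasurable φ volume := by
    rw [hφ, aemeasurable_indicator_iff measurableSet_Ioo]
    apply AEMeasurable.ennreal_ofReal
    apply ContinuousOn.aemeasurable ?_ measurableSet_Ioo
    apply ContinuousOn.norm
    apply hfc.comp (circ_cont θ).continuousOn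
    intro u hu
    exact circ_mem_ball θ hu.1.le hu.2
  set Φ : ℝ → ℝ≥0∞ := hφae.mk φ with hΦ
  have hΦm : Measurable Φ := hφae.measurable_mk
  have hΦeq : φ =ᵐ[volume] Φ := hφae.ae_eq_mk
  set G : ℝ → ℝ≥0∞ := fun r => ∫⁻ t in Ioc r₀ r, φ t * (wE t)⁻¹ with hG
  have hGmono : Monotone G := by
    intro r r' hrr'
    exact lintegral_mono_set (Ioc_subset_Ioc_right hrr')
  have hGm : Measurable G := hGmono.measurable
  set c₀ : ℝ≥0∞ := ENNReal.ofReal (r₀ * C₀) with hc₀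
  set e' : ℝ≥0∞ := ENNReal.ofReal ε' with he'
  -- pointwise bound
  have key : ∀ r ∈ Ioo ρ (1:ℝ),
      ENNReal.ofReal (‖(circ r θ) * ∫ t in (0:ℝ)..1, F ((t:ℂ) * circ r θ)‖ ^ p)
        ≤ (c₀ + e' * G r) ^ p := by
    intro r hr
    have hrpos : (0:ℝ) < r := lt_of_le_of_lt (le_trans hr₀0 hρ) hr.1
    have hr1 : r < 1 := hr.2
    have hr₀r : r₀ ≤ r := le_trans hρ hr.1.le
    rw [← ENNReal.ofReal_rpow_of_nonneg (norm_nonneg _) hp0.le]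
    apply ENNReal.rpow_le_rpow _ hp0.le
    -- real-variable estimates
    have hcont : ContinuousOn (fun u : ℝ => ‖F (circ u θ)‖) (Icc 0 r) := by
      apply ContinuousOn.norm
      apply hFc.comp (circ_cont θ).continuousOn
      intro u hu
      exact circ_mem_ball θ hu.1 (lt_of_le_of_lt hu.2 hr1)
    have i1 : IntervalIntegrable (fun u : ℝ => ‖F (circ u θ)‖) volume 0 r₀ := by
      apply ContinuousOn.intervalIntegrable
      apply hcont.mono
      rw [uIcc_of_le hr₀0]
      exact Icc_subset_Icc_right hr₀r
    have i2 : IntervalIntegrable (fun u : ℝ => ‖F (circ u θ)‖) volume r₀ r := by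
      apply ContinuousOn.intervalIntegrable
      apply hcont.mono
      rw [uIcc_of_le hr₀r]
      exact Icc_subset_Icc_left hr₀0
    have hinvcont : ContinuousOn (fun u : ℝ => ε' * (‖f (circ u θ)‖ * (1-u)⁻¹)) (Icc r₀ r) := by
      apply ContinuousOn.mul continuousOn_const
      apply ContinuousOn.mul
      · apply ContinuousOn.norm
        apply hfc.comp (circ_cont θ).continuousOn
        intro u hu
        exact circ_mem_ball θ (le_trans hr₀0 hu.1) (lt_of_le_of_lt hu.2 hr1)
      · apply ContinuousOn.inv₀ ((continuous_const.sub continuous_id).continuousOn)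
        intro u hu
        have := hu.2
        simp only [Pi.sub_apply, id]
        intro h
        have : u < 1 := lt_of_le_of_lt hu.2 hr1
        linarith
    have ih : IntervalIntegrable (fun u : ℝ => ε' * (‖f (circ u θ)‖ * (1-u)⁻¹)) volume r₀ r := by
      apply ContinuousOn.intervalIntegrable
      rwa [uIcc_of_le hr₀r]
    have hsplit : (∫ u in (0:ℝ)..r, ‖F (circ u θ)‖)
        = (∫ u in (0:ℝ)..r₀, ‖F (circ u θ)‖) + ∫ u in r₀..r, ‖F (circ u θ)‖ :=
      (intervalIntegral.integral_add_adjacent_intervals i1 i2).symm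
    have hb1 : (∫ u in (0:ℝ)..r₀, ‖F (circ u θ)‖) ≤ r₀ * C₀ := by
      calc (∫ u in (0:ℝ)..r₀, ‖F (circ u θ)‖) ≤ ∫ _ in (0:ℝ)..r₀, C₀ := by
            apply intervalIntegral.integral_mono_on hr₀0 i1 intervalIntegrable_const
            intro u hu
            exact hC u hu.1 hu.2
        _ = r₀ * C₀ := by simp [smul_eq_mul]
    have hb2 : (∫ u in r₀..r, ‖F (circ u θ)‖)
        ≤ ∫ u in r₀..r, ε' * (‖f (circ u θ)‖ * (1-u)⁻¹) := by
      apply intervalIntegral.integral_mono_on hr₀r i2 ih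
      intro u hu
      exact hFf u hu.1 (lt_of_le_of_lt hu.2 hr1)
    calc ENNReal.ofReal ‖(circ r θ) * ∫ t in (0:ℝ)..1, F ((t:ℂ) * circ r θ)‖
        ≤ ENNReal.ofReal ((r₀ * C₀) + ∫ u in r₀..r, ε' * (‖f (circ u θ)‖ * (1-u)⁻¹)) := by
          apply ENNReal.ofReal_le_ofReal
          calc ‖(circ r θ) * ∫ t in (0:ℝ)..1, F ((t:ℂ) * circ r θ)‖
              ≤ ∫ u in (0:ℝ)..r, ‖F (circ u θ)‖ := Tg_ray_bound θ hrpos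
            _ ≤ _ := by rw [hsplit]; exact add_le_add hb1 hb2
      _ ≤ c₀ + ENNReal.ofReal (∫ u in r₀..r, ε' * (‖f (circ u θ)‖ * (1-u)⁻¹)) :=
          ENNReal.ofReal_add_le
      _ ≤ c₀ + e' * G r := by
          apply add_le_add_right
          rw [intervalIntegral.integral_of_le hr₀r]
          rw [ofReal_integral_eq_lintegral_ofReal]
          · have hcong2 : ∀ u ∈ Ioc r₀ r,
                ENNReal.ofReal (ε' * (‖f (circ u θ)‖ * (1-u)⁻¹)) = e' * (φ u * (wE u)⁻¹) := by
              intro u hu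
              have hu1 : u < 1 := lt_of_le_of_lt hu.2 hr1
              have hu0 : 0 < u := lt_of_le_of_lt hr₀0 hu.1
              rw [ENNReal.ofReal_mul hε', ENNReal.ofReal_mul (norm_nonneg _)]
              rw [ENNReal.ofReal_inv_of_pos (by linarith : (0:ℝ) < 1 - u)]
              have humem : u ∈ Ioo (0:ℝ) 1 := ⟨hu0, hu1⟩
              rw [hφ, Set.indicator_of_mem humem, wE]
            rw [setLIntegral_congr_fun measurableSet_Ioc
              (fun u hu => hcong2 u hu)]
            rw [lintegral_const_mul' _ _ ENNReal.ofReal_ne_top]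
          · exact ih.1
          · filter_upwards [self_mem_ae_restrict measurableSet_Ioc] with u hu
            have hu1 : u < 1 := lt_of_le_of_lt hu.2 hr1
            apply mul_nonneg hε'
            apply mul_nonneg (norm_nonneg _)
            apply inv_nonneg.2
            linarith
  -- the L^p chain
  have e'top : e' ≠ ⊤ := ENNReal.ofReal_ne_top
  set Ip : ℝ≥0∞ := ∫⁻ t in Ioc (0:ℝ) 1, ENNReal.ofReal (‖f (circ t θ)‖ ^ p) with hIp
  have hGΦ : ∀ r : ℝ, G r = ∫⁻ t in Ioc r₀ r, Φ t * (wE t)⁻¹ := by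
    intro r
    exact lintegral_congr_ae (ae_restrict_of_ae (hΦeq.mul (EventuallyEq.refl _ fun t => (wE t)⁻¹)))
  have hX : ∫⁻ r in Ioo ρ 1, G r ^ p ≤ ENNReal.ofReal p ^ p * Ip := by
    calc ∫⁻ r in Ioo ρ 1, G r ^ p
        = ∫⁻ r in Ioo ρ 1, (∫⁻ t in Ioc r₀ r, Φ t * (wE t)⁻¹) ^ p :=
          lintegral_congr fun r => by rw [hGΦ r]
      _ ≤ ENNReal.ofReal p ^ p * ∫⁻ t in Ioo r₀ 1, Φ t ^ p := hardy hp Φ hΦm r₀ ρ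
      _ = ENNReal.ofReal p ^ p * ∫⁻ t in Ioo r₀ 1, φ t ^ p := by
          congr 1
          exact lintegral_congr_ae (ae_restrict_of_ae (hΦeq.symm.fun_comp (· ^ p)))
      _ ≤ ENNReal.ofReal p ^ p * Ip := by
          apply mul_le_mul_right
          have hind : ∀ t : ℝ, φ t ^ p
              = (Ioo (0:ℝ) 1).indicator (fun t => ENNReal.ofReal (‖f (circ t θ)‖ ^ p)) t := by
            intro t
            by_cases ht : t ∈ Ioo (0:ℝ) 1
            · rw [hφ, Set.indicator_of_mem ht, Set.indicator_of_mem ht,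
                ← ENNReal.ofReal_rpow_of_nonneg (norm_nonneg _) hp0.le]
            · rw [hφ, Set.indicator_of_notMem ht, Set.indicator_of_notMem ht,
                ENNReal.zero_rpow_of_pos hp0]
          calc ∫⁻ t in Ioo r₀ 1, φ t ^ p
              = ∫⁻ t in Ioo r₀ 1,
                  (Ioo (0:ℝ) 1).indicator (fun t => ENNReal.ofReal (‖f (circ t θ)‖ ^ p)) t :=
                lintegral_congr fun t => hind t
            _ ≤ ∫⁻ t, (Ioo (0:ℝ) 1).indicator (fun t => ENNReal.ofReal (‖f (circ t θ)‖ ^ p)) t :=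
                setLIntegral_le_lintegral _ _
            _ = ∫⁻ t in Ioo (0:ℝ) 1, ENNReal.ofReal (‖f (circ t θ)‖ ^ p) :=
                lintegral_indicator measurableSet_Ioo _
            _ ≤ Ip := lintegral_mono_set Ioo_subset_Ioc_self
  calc (∫⁻ r in Ioc ρ 1,
        ENNReal.ofReal (‖(circ r θ) * ∫ t in (0:ℝ)..1, F ((t:ℂ) * circ r θ)‖ ^ p)) ^ (1/p)
      = (∫⁻ r in Ioo ρ 1,
          ENNReal.ofReal (‖(circ r θ) * ∫ t in (0:ℝ)..1, F ((t:ℂ) * circ r θ)‖ ^ p)) ^ (1/p) := by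
        rw [setLIntegral_congr (Ioo_ae_eq_Ioc (a := ρ) (b := (1:ℝ)))]
    _ ≤ (∫⁻ r in Ioo ρ 1, (c₀ + e' * G r) ^ p) ^ (1/p) :=
        ENNReal.rpow_le_rpow (setLIntegral_mono' measurableSet_Ioo key) (by positivity)
    _ ≤ (∫⁻ r in Ioo ρ 1, c₀ ^ p) ^ (1/p) + (∫⁻ r in Ioo ρ 1, (e' * G r) ^ p) ^ (1/p) := by
        have mink := ENNReal.lintegral_Lp_add_le (μ := volume.restrict (Ioo ρ 1))
          (f := (fun _ => c₀ : ℝ → ℝ≥0∞)) (g := fun r => e' * G r)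
          aemeasurable_const ((hGm.const_mul e').aemeasurable) hp
        simp only [Pi.add_apply] at mink
        exact mink
    _ ≤ c₀ * ENNReal.ofReal (1-ρ) ^ (1/p) + e' * (ENNReal.ofReal p * Ip ^ (1/p)) := by
        apply add_le_add
        · rw [setLIntegral_const, Real.volume_Ioo,
            ENNReal.mul_rpow_of_nonneg _ _ (by positivity : (0:ℝ) ≤ 1/p),
            ← ENNReal.rpow_mul, mul_one_div_cancel hpne, ENNReal.rpow_one]
        · have h1 : ∫⁻ r in Ioo ρ 1, (e' * G r) ^ p = e' ^ p * ∫⁻ r in Ioo ρ 1, G r ^ p := by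
            rw [← lintegral_const_mul' _ _ (ENNReal.rpow_ne_top_of_nonneg hp0.le e'top)]
            exact lintegral_congr fun r => ENNReal.mul_rpow_of_nonneg _ _ hp0.le
          rw [h1, ENNReal.mul_rpow_of_nonneg _ _ (by positivity : (0:ℝ) ≤ 1/p),
            ← ENNReal.rpow_mul, mul_one_div_cancel hpne, ENNReal.rpow_one]
          apply mul_le_mul_right
          calc (∫⁻ r in Ioo ρ 1, G r ^ p) ^ (1/p)
              ≤ (ENNReal.ofReal p ^ p * Ip) ^ (1/p) :=
                ENNReal.rpow_le_rpow hX (by positivity)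
            _ = ENNReal.ofReal p * Ip ^ (1/p) := by
                rw [ENNReal.mul_rpow_of_nonneg _ _ (by positivity : (0:ℝ) ≤ 1/p),
                  ← ENNReal.rpow_mul, mul_one_div_cancel hpne, ENNReal.rpow_one]

/-- Let `1 ≤ p < ∞` and `g` in the little Bloch space (analytic on the
disc). Then for every analytic `f` with `ρ_{p,∞}(f) < ∞` one has `T_g f ∈ RM(p,0)`. -/
theorem stmt12 (p : ℝ) (hp : 1 ≤ p)
    (g : ℂ → ℂ) (hg : DifferentiableOn ℂ g (ball (0:ℂ) 1)) (hg0 : littleBloch g) :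
    ∀ f : ℂ → ℂ, DifferentiableOn ℂ f (ball (0:ℂ) 1) → rhoInf p f ≠ ⊤ →
      memRMp0 p (Tg g f) := by
  intro f hf hM
  have hp0 : (0:ℝ) < p := by linarith
  have hFa : AnalyticOnNhd ℂ (fun w => f w * deriv g w) (Metric.ball (0:ℂ) 1) :=
    (hf.analyticOnNhd isOpen_ball).mul ((hg.analyticOnNhd isOpen_ball).deriv)
  have hFc : ContinuousOn (fun w => f w * deriv g w) (Metric.ball (0:ℂ) 1) :=
    hFa.differentiableOn.continuousOn
  constructor
  · exact diffOn_aux hFa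
  · rw [ENNReal.tendsto_nhds_zero]
    intro ε hε
    set M := rhoInf p f with hMdef
    set K : ℝ≥0∞ := ENNReal.ofReal p * M + 1 with hK
    have hK0 : K ≠ 0 := by simp [hK]
    have hKt : K ≠ ⊤ := by
      rw [hK]
      exact ENNReal.add_ne_top.2 ⟨ENNReal.mul_ne_top ENNReal.ofReal_ne_top hM, ENNReal.one_ne_top⟩
    set a : ℝ≥0∞ := min 1 (ε/2/K) with ha
    have ha0 : a ≠ 0 := by
      have h2 : ε/2/K ≠ 0 := by simp [ENNReal.div_eq_zero_iff, hε.ne', hKt]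
      exact ne_of_gt (lt_min zero_lt_one (zero_lt_iff.2 h2))
    have hat : a ≠ ⊤ := ne_top_of_le_ne_top ENNReal.one_ne_top (min_le_left _ _)
    set ε' : ℝ := a.toReal with hε'
    have hε'0 : 0 < ε' := ENNReal.toReal_pos ha0 hat
    have haofReal : ENNReal.ofReal ε' = a := ENNReal.ofReal_toReal hat
    obtain ⟨r₀, hr₀0, hr₀1, hbloch⟩ := bloch_small hg0 hε'0
    obtain ⟨C₀, hC₀b⟩ := (isCompact_closedBall (0:ℂ) r₀).exists_bound_of_continuousOn
      (hFc.mono (closedBall_subset_ball hr₀1))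
    have hC₀0 : 0 ≤ C₀ := le_trans (norm_nonneg _) (hC₀b 0 (mem_closedBall_self hr₀0))
    set c₀ : ℝ≥0∞ := ENNReal.ofReal (r₀ * C₀) with hc₀
    set K' : ℝ≥0∞ := c₀ + 1 with hK'
    have hK'0 : K' ≠ 0 := by simp [hK']
    have hK't : K' ≠ ⊤ := by
      rw [hK']
      exact ENNReal.add_ne_top.2 ⟨ENNReal.ofReal_ne_top, ENNReal.one_ne_top⟩
    set b : ℝ≥0∞ := min 1 (ε/2/K') with hb
    have hb0 : b ≠ 0 := by
      have h2 : ε/2/K' ≠ 0 := by simp [ENNReal.div_eq_zero_iff, hε.ne', hK't]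
      exact ne_of_gt (lt_min zero_lt_one (zero_lt_iff.2 h2))
    have hbt : b ≠ ⊤ := ne_top_of_le_ne_top ENNReal.one_ne_top (min_le_left _ _)
    have hbp0 : b ^ p ≠ 0 := by
      simp only [ne_eq, ENNReal.rpow_eq_zero_iff, not_or, not_and, not_lt]
      exact ⟨fun h => absurd h hb0, fun h => absurd h hbt⟩
    have hbpt : b ^ p ≠ ⊤ := ENNReal.rpow_ne_top_of_nonneg hp0.le hbt
    set η : ℝ := (b ^ p).toReal with hη
    have hη0 : 0 < η := ENNReal.toReal_pos hbp0 hbpt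
    have hηofReal : ENNReal.ofReal η = b ^ p := ENNReal.ofReal_toReal hbpt
    have hmax1 : max r₀ (1 - η) < 1 := max_lt hr₀1 (by linarith)
    filter_upwards [Ioo_mem_nhdsLT_of_mem
      (show (1:ℝ) ∈ Ioc (max r₀ (1-η)) 1 from ⟨hmax1, le_refl 1⟩)] with ρ hρ
    have hρr₀ : r₀ ≤ ρ := le_of_lt (lt_of_le_of_lt (le_max_left _ _) hρ.1)
    have hρ1 : ρ < 1 := hρ.2
    have hρη : 1 - ρ ≤ η := by
      have := lt_of_le_of_lt (le_max_right _ _) hρ.1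
      linarith
    apply iSup_le
    intro θ
    -- the two hypotheses of per_theta
    have hFf : ∀ u : ℝ, r₀ ≤ u → u < 1 →
        ‖(fun w => f w * deriv g w) (circ u θ)‖
          ≤ ε' * (‖f (circ u θ)‖ * (1-u)⁻¹) := by
      intro u hu1 hu2
      have hu0 : 0 ≤ u := le_trans hr₀0 hu1
      have habs : ‖circ u θ‖ = u := by
        rw [circ_norm θ hu0]
      have hz := hbloch (circ u θ) (by rw [habs]; exact hu1) (by rw [habs]; exact hu2)
      rw [habs] at hz
      set d := ‖deriv g (circ u θ)‖ with hd
      have hd0 : 0 ≤ d := norm_nonneg _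
      have h1u : (1 - u) * d ≤ ε' := le_trans (by nlinarith [mul_nonneg (mul_nonneg hu0 (by linarith : (0:ℝ) ≤ 1-u)) hd0]) hz
      have hd2 : d ≤ ε' * (1-u)⁻¹ := by
        rw [← div_eq_mul_inv, le_div_iff₀ (by linarith : (0:ℝ) < 1 - u)]
        linarith [h1u]
      calc ‖f (circ u θ) * deriv g (circ u θ)‖ = ‖f (circ u θ)‖ * d := norm_mul _ _
        _ ≤ ‖f (circ u θ)‖ * (ε' * (1-u)⁻¹) :=
            mul_le_mul_of_nonneg_left hd2 (norm_nonneg _)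
        _ = ε' * (‖f (circ u θ)‖ * (1-u)⁻¹) := by ring
    have hCu : ∀ u : ℝ, 0 ≤ u → u ≤ r₀ →
        ‖(fun w => f w * deriv g w) (circ u θ)‖ ≤ C₀ := by
      intro u h0 h1
      apply hC₀b
      rw [Metric.mem_closedBall, dist_zero_right, circ_norm θ h0]
      exact h1
    have hbd := per_theta p hp (fun w => f w * deriv g w) f hFc hf.continuousOn
      hr₀0 hρr₀ hρ1 hε'0.le hC₀0 θ hFf hCu
    have hIpM : (∫⁻ t in Ioc (0:ℝ) 1, ENNReal.ofReal (‖f (circ t θ)‖ ^ p)) ^ (1/p) ≤ M := by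
      rw [hMdef, rhoInf]
      exact le_iSup (fun θ : ℝ =>
        (∫⁻ r in Ioc (0:ℝ) 1, ENNReal.ofReal (‖f (circ r θ)‖ ^ p)) ^ (1/p)) θ
    calc (∫⁻ r in Ioc ρ 1, ENNReal.ofReal (‖Tg g f (circ r θ)‖ ^ p)) ^ (1/p)
        ≤ c₀ * ENNReal.ofReal (1-ρ) ^ (1/p)
          + ENNReal.ofReal ε' * (ENNReal.ofReal p *
              (∫⁻ t in Ioc (0:ℝ) 1, ENNReal.ofReal (‖f (circ t θ)‖ ^ p)) ^ (1/p)) := hbd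
      _ ≤ ε/2 + ε/2 := by
          apply add_le_add
          · -- first term
            have h1 : ENNReal.ofReal (1-ρ) ^ (1/p) ≤ b := by
              calc ENNReal.ofReal (1-ρ) ^ (1/p) ≤ (ENNReal.ofReal η) ^ (1/p) :=
                    ENNReal.rpow_le_rpow (ENNReal.ofReal_le_ofReal hρη) (by positivity)
                _ = b := by
                    rw [hηofReal, ← ENNReal.rpow_mul, mul_one_div_cancel (ne_of_gt hp0),
                      ENNReal.rpow_one]
            calc c₀ * ENNReal.ofReal (1-ρ) ^ (1/p) ≤ K' * (ε/2/K') :=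
                  mul_le_mul' (le_add_right (le_refl c₀)) (le_trans h1 (min_le_right _ _))
              _ = ε/2 := ENNReal.mul_div_cancel hK'0 hK't
          · -- second term
            calc ENNReal.ofReal ε' * (ENNReal.ofReal p *
                  (∫⁻ t in Ioc (0:ℝ) 1, ENNReal.ofReal (‖f (circ t θ)‖ ^ p)) ^ (1/p))
                ≤ (ε/2/K) * K := by
                  apply mul_le_mul'
                  · rw [haofReal]; exact min_le_right _ _
                  · calc ENNReal.ofReal p *
                        (∫⁻ t in Ioc (0:ℝ) 1, ENNReal.ofReal (‖f (circ t θ)‖ ^ p)) ^ (1/p)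
                        ≤ ENNReal.ofReal p * M := mul_le_mul_right hIpM _
                      _ ≤ K := le_add_right (le_refl _)
              _ = ε/2 := ENNReal.div_mul_cancel hK0 hKt
      _ = ε := ENNReal.add_halves ε
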